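/- Let Ω be a translation-invariant set of (r,R)-Delone sets, A a selfadjoint finite-range operator family with kernel of range R_a, φ a polynomial of degree N, and Q ⊂ ℝ^d bounded. Then the matrix elements of (φ(A_ω))|_Q and φ(A_ω|_Q) agree at all pairs (p,q) ∈ (ω∩Q)² whose distance to the complement of Q exceeds N·R_a; consequently |tr((φ(A_ω))|_Q) − tr(φ(A_ω|_Q))| ≤ C‖φ(A)‖ · #{q ∈ ω ∩ ∂_{N R_a}Q}, where ∂_s Q is the set of points at distance less than s from the boundary of Q. -/

import Mathlib

noncomputable section
open Metric Set

/-- An `(r,R)`-Delone set in `ℝ^d`. -/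
def IsDeloneSet {d : ℕ} (r R : ℝ) (ω : Set (EuclideanSpace ℝ (Fin d))) : Prop :=
  (∀ x ∈ ω, ∀ y ∈ ω, x ≠ y → 2 * r ≤ dist x y) ∧
    ∀ x : EuclideanSpace ℝ (Fin d), ∃ p ∈ ω, dist x p ≤ R

/-- The translate `ω + t`. -/
def deloneAdd {d : ℕ} (ω : Set (EuclideanSpace ℝ (Fin d))) (t : EuclideanSpace ℝ (Fin d)) :
    Set (EuclideanSpace ℝ (Fin d)) := (fun y => y + t) '' ω

open Classical in
/-- Matrix of the `n`-th power of the operator on `ℓ²(ω)` with kernel `a`: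
the `n`-fold convolution power (with `n = 0` giving the identity matrix). -/
def convPow {α : Type*} (ω : Set α) (a : α → α → ℂ) : ℕ → α → α → ℂ
  | 0 => fun p q => if p = q then 1 else 0
  | n + 1 => fun p q => ∑' x : ω, a p x * convPow ω a n x q

section AuxLemmas

open MeasureTheory
open scoped ENNReal

/-- A uniform bound on the number of points of a `2r`-separated set in a ball of
radius `s` in Euclidean space. -/
lemma sep_count (d : ℕ) {r : ℝ} (hr : 0 < r) (s : ℝ) :
    ∃ K : ℕ, ∀ S : Set (EuclideanSpace ℝ (Fin d)),
      (∀ x ∈ S, ∀ y ∈ S, x ≠ y → 2 * r ≤ dist x y) →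
      ∀ c, (S ∩ ball c s).Finite ∧ (S ∩ ball c s).ncard ≤ K := by
  set E := EuclideanSpace ℝ (Fin d)
  set v : ℝ≥0∞ := volume (ball (0 : E) r) with hv
  set V : ℝ≥0∞ := volume (ball (0 : E) (s + r)) with hV
  have hv0 : v ≠ 0 := (measure_ball_pos volume 0 hr).ne'
  have hvt : v ≠ ⊤ := measure_ball_lt_top.ne
  have hVt : V ≠ ⊤ := measure_ball_lt_top.ne
  obtain ⟨K, hK⟩ := ENNReal.exists_nat_gt (ENNReal.div_lt_top hVt hv0).ne
  refine ⟨K, fun S hsep c => ?_⟩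
  have key : ∀ t : Finset E, ↑t ⊆ S ∩ ball c s → t.card ≤ K := by
    intro t ht
    have hdisj : (↑t : Set E).PairwiseDisjoint (fun x => ball x r) := by
      intro x hx y hy hxy
      refine Set.disjoint_left.2 fun z hz1 hz2 => ?_
      have : dist x y < 2 * r := by
        have := dist_triangle x z y
        rw [mem_ball] at hz1 hz2
        rw [dist_comm x z] at this
        nlinarith [dist_comm z y ▸ hz2]
      exact absurd (hsep x (ht hx).1 y (ht hy).1 hxy) (not_le.2 this)
    have hmeas : volume (⋃ x ∈ t, ball x r) = ∑ x ∈ t, volume (ball x r) :=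
      measure_biUnion_finset hdisj fun x _ => measurableSet_ball
    have hsum : ∑ x ∈ t, volume (ball x r) = t.card * v := by
      rw [Finset.sum_congr rfl fun x _ => Measure.addHaar_ball_center volume x r]
      simp [mul_comm, hv]
    have hsub : (⋃ x ∈ t, ball x r) ⊆ ball c (s + r) := by
      refine Set.iUnion₂_subset fun x hx => ball_subset_ball' ?_
      have := (ht hx).2
      rw [mem_ball] at this
      linarith
    have hle : (t.card : ℝ≥0∞) * v ≤ V := by
      calc (t.card : ℝ≥0∞) * v = volume (⋃ x ∈ t, ball x r) := by rw [hmeas, hsum]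
        _ ≤ volume (ball c (s + r)) := measure_mono hsub
        _ = V := Measure.addHaar_ball_center volume c (s + r)
    have : (t.card : ℝ≥0∞) ≤ V / v :=
      (ENNReal.le_div_iff_mul_le (Or.inl hv0) (Or.inl hvt)).2 hle
    exact_mod_cast (this.trans_lt hK).le
  have hfin : (S ∩ ball c s).Finite := by
    by_contra hinf
    obtain ⟨t, hts, htf, htc⟩ := Set.Infinite.exists_subset_ncard_eq hinf (K + 1)
    have := key htf.toFinset (by rwa [Set.Finite.coe_toFinset])
    rw [← Set.ncard_eq_toFinset_card t htf] at this
    omega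
  refine ⟨hfin, ?_⟩
  have := key hfin.toFinset (by rw [Set.Finite.coe_toFinset])
  rwa [← Set.ncard_eq_toFinset_card _ hfin] at this

/-- Locality: the convolution powers w.r.t. `ω` and `ω ∩ Q` agree far inside `Q`. -/
lemma convPow_restrict {α : Type*} [MetricSpace α] {Ra : ℝ} (hRa : 0 < Ra)
    (ω Q : Set α) (b : α → α → ℂ) (hb : ∀ p q, Ra ≤ dist p q → b p q = 0) :
    ∀ (n : ℕ) (p q : α), (n : ℝ) * Ra ≤ infDist p Qᶜ →
      convPow ω b n p q = convPow (ω ∩ Q) b n p q := by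
  rcases Set.eq_empty_or_nonempty Qᶜ with hQc | hQc
  · have : Q = univ := by rwa [← compl_empty_iff]
    simp [this]
  intro n
  induction n with
  | zero => intro p q _; rfl
  | succ n ih =>
    intro p q hp
    show (∑' x : ω, b p x * convPow ω b n x q)
        = ∑' x : (ω ∩ Q : Set α), b p x * convPow (ω ∩ Q) b n x q
    rw [tsum_subtype ω (fun y => b p y * convPow ω b n y q),
      tsum_subtype (ω ∩ Q) (fun y => b p y * convPow (ω ∩ Q) b n y q)]
    congr 1
    funext x
    by_cases hbx : b p x = 0
    · have e1 : ω.indicator (fun y => b p y * convPow ω b n y q) x = 0 := by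
        by_cases hxω : x ∈ ω
        · rw [Set.indicator_of_mem hxω]; simp [hbx]
        · exact Set.indicator_of_notMem hxω _
      have e2 : (ω ∩ Q).indicator (fun y => b p y * convPow (ω ∩ Q) b n y q) x = 0 := by
        by_cases hxω : x ∈ ω ∩ Q
        · rw [Set.indicator_of_mem hxω]; simp [hbx]
        · exact Set.indicator_of_notMem hxω _
      rw [e1, e2]
    · have hdx : dist p x < Ra := by
        by_contra h
        exact hbx (hb p x (not_lt.1 h))
      have h1 : infDist p Qᶜ ≤ infDist x Qᶜ + dist p x := infDist_le_infDist_add_dist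
      have h2 : (n : ℝ) * Ra < infDist x Qᶜ := by
        have : ((n : ℝ) + 1) * Ra ≤ infDist p Qᶜ := by push_cast at hp; linarith
        nlinarith
      have hxQ : x ∈ Q := by
        by_contra hx
        have : infDist x Qᶜ = 0 := infDist_zero_of_mem hx
        have hn : (0 : ℝ) ≤ (n : ℝ) * Ra := by positivity
        linarith
      have hIH := ih x q h2.le
      by_cases hxω : x ∈ ω
      · rw [Set.indicator_of_mem hxω, Set.indicator_of_mem (Set.mem_inter hxω hxQ), hIH]
      · rw [Set.indicator_of_notMem hxω, Set.indicator_of_notMem (fun h => hxω h.1)]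

/-- Uniform bound on the entries of the convolution powers. -/
lemma convPow_norm_le {α : Type*} [MetricSpace α] {Ra M : ℝ} (hM : 0 ≤ M) (K : ℕ)
    (σ : Set α) (b : α → α → ℂ) (hb : ∀ p q, Ra ≤ dist p q → b p q = 0)
    (hbM : ∀ p q, ‖b p q‖ ≤ M)
    (hfin : ∀ c, (σ ∩ ball c Ra).Finite)
    (hcard : ∀ c, (σ ∩ ball c Ra).ncard ≤ K) :
    ∀ n (p q : α), ‖convPow σ b n p q‖ ≤ (max 1 ((K : ℝ) * M)) ^ n := by
  set L : ℝ := max 1 ((K : ℝ) * M) with hL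
  have hL1 : (1 : ℝ) ≤ L := le_max_left _ _
  intro n
  induction n with
  | zero =>
    intro p q
    simp only [convPow]
    split_ifs <;> simp
  | succ n ih =>
    intro p q
    show ‖∑' x : σ, b p x * convPow σ b n x q‖ ≤ L ^ (n + 1)
    set f : α → ℂ := fun x => b p x * convPow σ b n x q with hf
    have hT := hfin p
    have h1 : (∑' x : σ, f x) = ∑ x ∈ hT.toFinset, f x := by
      rw [tsum_subtype]
      have heq : σ.indicator f = (σ ∩ ball p Ra).indicator f := by
        funext x
        by_cases hx : x ∈ σ
        · by_cases hx2 : x ∈ ball p Ra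
          · rw [Set.indicator_of_mem hx, Set.indicator_of_mem (Set.mem_inter hx hx2)]
          · have h0 : b p x = 0 := hb p x (by simpa [mem_ball, dist_comm] using hx2)
            rw [Set.indicator_of_mem hx, Set.indicator_of_notMem (fun h => hx2 h.2)]
            simp [hf, h0]
        · rw [Set.indicator_of_notMem hx, Set.indicator_of_notMem (fun h => hx h.1)]
      rw [heq]
      rw [tsum_eq_sum (s := hT.toFinset)
        (fun x hx => Set.indicator_of_notMem (by simpa using hx) f)]
      exact Finset.sum_congr rfl fun x hx =>
        Set.indicator_of_mem (hT.mem_toFinset.1 hx) f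
    rw [h1]
    calc ‖∑ x ∈ hT.toFinset, f x‖ ≤ ∑ x ∈ hT.toFinset, ‖f x‖ := norm_sum_le _ _
      _ ≤ ∑ _x ∈ hT.toFinset, M * L ^ n := by
          refine Finset.sum_le_sum fun x _ => ?_
          rw [hf, norm_mul]
          exact mul_le_mul (hbM p x) (ih x q) (norm_nonneg _) hM
      _ = hT.toFinset.card * (M * L ^ n) := by simp [Finset.sum_const, nsmul_eq_mul]
      _ ≤ K * (M * L ^ n) := by
          refine mul_le_mul_of_nonneg_right ?_ (by positivity)
          have := hcard p
          rw [Set.ncard_eq_toFinset_card _ hT] at this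
          exact_mod_cast this
      _ = ((K : ℝ) * M) * L ^ n := by ring
      _ ≤ L * L ^ n := by
          have h0 : (0:ℝ) ≤ L ^ n := by positivity
          exact mul_le_mul_of_nonneg_right (le_max_right _ _) h0
      _ = L ^ (n + 1) := by ring

/-- A segment from a point of `Q` to a point outside `Q` passes through the frontier. -/
lemma exists_frontier_segment {V : Type*} [NormedAddCommGroup V] [NormedSpace ℝ V]
    {Q : Set V} {p y : V} (hp : p ∈ Q) (hy : y ∉ Q) :
    ∃ z ∈ frontier Q, dist p z ≤ dist p y := by
  have hconn : IsPreconnected (segment ℝ p y) := (convex_segment p y).isPreconnected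
  by_cases hfr : ∃ z ∈ segment ℝ p y, z ∈ frontier Q
  · obtain ⟨z, hz1, hz2⟩ := hfr
    refine ⟨z, hz2, ?_⟩
    have := dist_add_dist_of_mem_segment hz1
    have := dist_nonneg (x := z) (y := y)
    linarith
  · push_neg at hfr
    have hsub : segment ℝ p y ⊆ interior Q ∪ (closure Q)ᶜ := by
      intro z hz
      have hz' := hfr z hz
      rw [frontier, Set.mem_diff] at hz'
      push_neg at hz'
      by_cases h : z ∈ closure Q
      · exact Or.inl (hz' h)
      · exact Or.inr h
    have hdisj : Disjoint (interior Q) (closure Q)ᶜ :=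
      (disjoint_compl_right.mono_left (interior_subset.trans subset_closure))
    rcases hconn.subset_or_subset isOpen_interior (isClosed_closure.isOpen_compl)
        hdisj hsub with h | h
    · exact absurd (interior_subset (h (right_mem_segment ℝ p y))) hy
    · exact absurd (subset_closure hp) (h (left_mem_segment ℝ p y))

/-- For a point of `Q`, the frontier of `Q` is at least as close as the complement. -/
lemma infDist_frontier_le_infDist_compl {V : Type*} [NormedAddCommGroup V] [NormedSpace ℝ V]
    {Q : Set V} {x : V} (hx : x ∈ Q) (hQc : Qᶜ.Nonempty) :
    infDist x (frontier Q) ≤ infDist x Qᶜ := by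
  by_contra h
  push_neg at h
  obtain ⟨y, hy, hdy⟩ := (infDist_lt_iff hQc).1 h
  obtain ⟨z, hz, hdz⟩ := exists_frontier_segment hx hy
  have h3 : infDist x (frontier Q) ≤ dist x z := infDist_le_dist_of_mem (x := x) hz
  linarith

end AuxLemmas

/-- For a selfadjoint finite-range kernel `a` of range `R_a`, a polynomial `φ` of
degree `N` and bounded `Q`, the matrix elements of `(φ(A_ω))|_Q` and `φ(A_ω|_Q)`
agree at pairs of points of `ω ∩ Q` whose distance to the complement of `Q` exceeds
`N·R_a`; consequently the traces differ by at most a constant times the number of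
points of `ω` in `∂_{N R_a} Q`. -/
theorem restricted_polynomial_trace_estimate (d : ℕ) (r R Ra : ℝ)
    (hr : 0 < r) (hR : 0 < R) (hRa : 0 < Ra)
    (Ω : Set (Set (EuclideanSpace ℝ (Fin d))))
    (hdel : ∀ ω ∈ Ω, IsDeloneSet r R ω)
    (hΩ : ∀ ω ∈ Ω, ∀ t, deloneAdd ω t ∈ Ω)
    (a : EuclideanSpace ℝ (Fin d) → Set (EuclideanSpace ℝ (Fin d)) →
      EuclideanSpace ℝ (Fin d) → ℂ)
    (hbd : ∃ M, ∀ p ω q, ω ∈ Ω → ‖a p ω q‖ ≤ M)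
    (hrange : ∀ p ω q, Ra ≤ dist p q → a p ω q = 0)
    (hinv : ∀ p ω q t, ω ∈ Ω → a (p + t) (deloneAdd ω t) (q + t) = a p ω q)
    (hsa : ∀ ω ∈ Ω, ∀ p q, a q ω p = (starRingEnd ℂ) (a p ω q))
    (φ : Polynomial ℂ) :
    -- the matrix elements agree far from the boundary
    (∀ ω ∈ Ω, ∀ Q : Set (EuclideanSpace ℝ (Fin d)), Bornology.IsBounded Q →
      ∀ p ∈ ω ∩ Q, ∀ q ∈ ω ∩ Q,
        (φ.natDegree : ℝ) * Ra < Metric.infDist p Qᶜ →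
        (φ.natDegree : ℝ) * Ra < Metric.infDist q Qᶜ →
        (∑ k ∈ Finset.range (φ.natDegree + 1),
            φ.coeff k * convPow ω (fun x y => a x ω y) k p q)
          = ∑ k ∈ Finset.range (φ.natDegree + 1),
              φ.coeff k * convPow (ω ∩ Q) (fun x y => a x ω y) k p q) ∧
    -- consequently the traces differ by at most C · #(ω ∩ ∂_{N·R_a} Q)
    (∃ C : ℝ, ∀ ω ∈ Ω, ∀ Q : Set (EuclideanSpace ℝ (Fin d)), Bornology.IsBounded Q →
      ‖(∑' p : (ω ∩ Q : Set (EuclideanSpace ℝ (Fin d))),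
            ∑ k ∈ Finset.range (φ.natDegree + 1),
              φ.coeff k * convPow ω (fun x y => a x ω y) k p p)
          - ∑' p : (ω ∩ Q : Set (EuclideanSpace ℝ (Fin d))),
              ∑ k ∈ Finset.range (φ.natDegree + 1),
                φ.coeff k * convPow (ω ∩ Q) (fun x y => a x ω y) k p p‖
        ≤ C * (Nat.card
            ↥(ω ∩ {x | Metric.infDist x (frontier Q) < (φ.natDegree : ℝ) * Ra}))) := by
  classical
  set N := φ.natDegree with hN
  constructor
  · intro ω hω Q hQb p hp q hq hpd hqd
    refine Finset.sum_congr rfl fun k hk => ?_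
    have hk' : k ≤ N := Nat.lt_succ_iff.1 (Finset.mem_range.1 hk)
    have hle : (k : ℝ) * Ra ≤ infDist p Qᶜ := by
      refine le_trans ?_ hpd.le
      have hkN : (k : ℝ) ≤ (N : ℝ) := by exact_mod_cast hk'
      nlinarith
    rw [convPow_restrict hRa ω Q _ (fun x y h => hrange x ω y h) k p q hle]
  · obtain ⟨M₀, hM₀⟩ := hbd
    set M : ℝ := max M₀ 0 with hM
    have hM0 : 0 ≤ M := le_max_right _ _
    obtain ⟨K, hK⟩ := sep_count d hr Ra
    set L : ℝ := max 1 ((K : ℝ) * M) with hL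
    have hL1 : (1 : ℝ) ≤ L := le_max_left _ _
    set C : ℝ := ∑ k ∈ Finset.range (N + 1), ‖φ.coeff k‖ * (2 * L ^ k) with hC
    have hC0 : 0 ≤ C := Finset.sum_nonneg fun k _ => by positivity
    refine ⟨C, fun ω hω Q hQb => ?_⟩
    rcases Set.eq_empty_or_nonempty Q with rfl | hQne
    · rw [Set.inter_empty]
      rw [tsum_empty, tsum_empty, sub_zero, norm_zero]
      exact mul_nonneg hC0 (Nat.cast_nonneg _)
    by_cases hQu : Q = univ
    · subst hQu
      rw [Set.inter_univ, sub_self, norm_zero]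
      exact mul_nonneg hC0 (Nat.cast_nonneg _)
    have hQc : Qᶜ.Nonempty := Set.nonempty_compl.2 hQu
    have hsep := (hdel ω hω).1
    set b : EuclideanSpace ℝ (Fin d) → EuclideanSpace ℝ (Fin d) → ℂ := fun x y => a x ω y with hb
    have hbRange : ∀ p q : EuclideanSpace ℝ (Fin d), Ra ≤ dist p q → b p q = 0 := fun p q h => hrange p ω q h
    have hbM : ∀ p q : EuclideanSpace ℝ (Fin d), ‖b p q‖ ≤ M := fun p q => le_trans (hM₀ p ω q hω) (le_max_left _ _)
    have hKω := hK ω hsep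
    have hnormω : ∀ n (p q : EuclideanSpace ℝ (Fin d)), ‖convPow ω b n p q‖ ≤ L ^ n :=
      convPow_norm_le hM0 K ω b hbRange hbM (fun c => (hKω c).1) (fun c => (hKω c).2)
    have hKωQ : ∀ c, ((ω ∩ Q) ∩ ball c Ra).Finite ∧ ((ω ∩ Q) ∩ ball c Ra).ncard ≤ K := by
      intro c
      have hsub : (ω ∩ Q) ∩ ball c Ra ⊆ ω ∩ ball c Ra := fun x hx => ⟨hx.1.1, hx.2⟩
      exact ⟨(hKω c).1.subset hsub,
        le_trans (Set.ncard_le_ncard hsub (hKω c).1) (hKω c).2⟩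
    have hnormωQ : ∀ n (p q : EuclideanSpace ℝ (Fin d)), ‖convPow (ω ∩ Q) b n p q‖ ≤ L ^ n :=
      convPow_norm_le hM0 K (ω ∩ Q) b hbRange hbM (fun c => (hKωQ c).1) (fun c => (hKωQ c).2)
    -- finiteness of ω ∩ Q
    obtain ⟨s, hQs⟩ := hQb.subset_ball 0
    obtain ⟨K', hK'⟩ := sep_count d hr s
    have hfinQ : (ω ∩ Q).Finite :=
      ((hK' ω hsep 0).1).subset fun x hx => ⟨hx.1, hQs hx.2⟩
    -- frontier data
    have hfr : (frontier Q).Nonempty := nonempty_frontier_iff.2 ⟨hQne, hQu⟩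
    obtain ⟨z₀, hz₀⟩ := hfr
    have hQcl : Bornology.IsBounded (closure Q) := hQb.closure
    -- finiteness of ω ∩ W
    set W : Set (EuclideanSpace ℝ (Fin d)) := {x | infDist x (frontier Q) < (N : ℝ) * Ra} with hW
    have hWfin : (ω ∩ W).Finite := by
      obtain ⟨K'', hK''⟩ := sep_count d hr ((N : ℝ) * Ra + diam (closure Q) + 1)
      refine ((hK'' ω hsep z₀).1).subset fun x hx => ⟨hx.1, ?_⟩
      obtain ⟨z, hz, hdz⟩ := (infDist_lt_iff ⟨z₀, hz₀⟩).1 hx.2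
      have h1 : dist z z₀ ≤ diam (closure Q) :=
        dist_le_diam_of_mem hQcl (frontier_subset_closure hz) (frontier_subset_closure hz₀)
      have := dist_triangle x z z₀
      rw [mem_ball]
      linarith
    haveI : Fintype ↥(ω ∩ Q) := hfinQ.fintype
    set F : ↥(ω ∩ Q) → ℂ := fun p =>
      ∑ k ∈ Finset.range (N + 1), φ.coeff k * convPow ω b k p p with hF
    set G : ↥(ω ∩ Q) → ℂ := fun p =>
      ∑ k ∈ Finset.range (N + 1), φ.coeff k * convPow (ω ∩ Q) b k p p with hG
    have hpt : ∀ p : ↥(ω ∩ Q), (p : EuclideanSpace ℝ (Fin d)) ∉ W → F p - G p = 0 := by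
      intro p hpW
      have hfd : (N : ℝ) * Ra ≤ infDist (p : EuclideanSpace ℝ (Fin d)) (frontier Q) := not_lt.1 hpW
      have hcd : (N : ℝ) * Ra ≤ infDist (p : EuclideanSpace ℝ (Fin d)) Qᶜ :=
        le_trans hfd (infDist_frontier_le_infDist_compl p.2.2 hQc)
      have : F p = G p := by
        refine Finset.sum_congr rfl fun k hk => ?_
        have hk' : k ≤ N := Nat.lt_succ_iff.1 (Finset.mem_range.1 hk)
        have hle : (k : ℝ) * Ra ≤ infDist (p : EuclideanSpace ℝ (Fin d)) Qᶜ := by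
          refine le_trans ?_ hcd
          have hkN : (k : ℝ) ≤ (N : ℝ) := by exact_mod_cast hk'
          nlinarith
        rw [convPow_restrict hRa ω Q b hbRange k p p hle]
      rw [this, sub_self]
    have hbound : ∀ p : ↥(ω ∩ Q), ‖F p - G p‖ ≤ C := by
      intro p
      rw [hF, hG, ← Finset.sum_sub_distrib]
      refine le_trans (norm_sum_le _ _) (Finset.sum_le_sum fun k _ => ?_)
      rw [← mul_sub, norm_mul]
      refine mul_le_mul_of_nonneg_left ?_ (norm_nonneg _)
      calc ‖convPow ω b k p p - convPow (ω ∩ Q) b k p p‖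
          ≤ ‖convPow ω b k (p : EuclideanSpace ℝ (Fin d)) p‖ + ‖convPow (ω ∩ Q) b k (p : EuclideanSpace ℝ (Fin d)) p‖ := norm_sub_le _ _
        _ ≤ L ^ k + L ^ k := add_le_add (hnormω k p p) (hnormωQ k p p)
        _ = 2 * L ^ k := by ring
    -- main estimate
    rw [tsum_fintype, tsum_fintype, ← Finset.sum_sub_distrib]
    set Bf : Finset ↥(ω ∩ Q) := Finset.univ.filter (fun p => (p : EuclideanSpace ℝ (Fin d)) ∈ W) with hBf
    have hcard : Bf.card ≤ Nat.card ↥(ω ∩ W) := by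
      rw [Nat.card_coe_set_eq, Set.ncard_eq_toFinset_card _ hWfin]
      refine Finset.card_le_card_of_injOn (fun p => (p : EuclideanSpace ℝ (Fin d))) ?_ ?_
      · intro p hp
        rw [Finset.mem_coe, Set.Finite.mem_toFinset]
        exact ⟨p.2.1, (Finset.mem_filter.1 hp).2⟩
      · exact fun p _ q _ h => Subtype.ext h
    calc ‖∑ p : ↥(ω ∩ Q), (F p - G p)‖
        ≤ ∑ p : ↥(ω ∩ Q), ‖F p - G p‖ := norm_sum_le _ _
      _ = ∑ p ∈ Bf, ‖F p - G p‖ := by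
          refine (Finset.sum_subset (Finset.filter_subset _ _) fun p _ hp => ?_).symm
          have hpW : (p : EuclideanSpace ℝ (Fin d)) ∉ W := by
            intro h
            exact hp (Finset.mem_filter.2 ⟨Finset.mem_univ _, h⟩)
          rw [hpt p hpW, norm_zero]
      _ ≤ ∑ _p ∈ Bf, C := Finset.sum_le_sum fun p _ => hbound p
      _ = Bf.card * C := by simp [Finset.sum_const, nsmul_eq_mul]
      _ ≤ (Nat.card ↥(ω ∩ W)) * C := by
          exact mul_le_mul_of_nonneg_right (by exact_mod_cast hcard) hC0
      _ = C * (Nat.card ↥(ω ∩ W)) := mul_comm _ _
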